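/- Let g : F(u,v) → Z ⋊ Z be the homomorphism with g(u) = (1,0) and g(v) = (0,1), where Z ⋊ Z has multiplication (a,b)·(c,d) = (a + (-1)^b c, b + d). Then the kernel of g is a free group with basis the set {B_{k,l} = v^k u^l (u v u v⁻¹) u^{-l} v^{-k} : k, l ∈ Z}. In particular ker g is a free group of countably infinite rank. -/

import Mathlib

/-- The underlying set of the nontrivial semidirect product `ℤ ⋊ ℤ`
(the fundamental group of the Klein bottle). -/
@[ext]
structure KB where
  a : ℤ
  b : ℤ

namespace KB

instance : Mul KB := ⟨fun x y => ⟨x.a + ((-1 : ℤˣ) ^ x.b : ℤˣ) * y.a, x.b + y.b⟩⟩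
instance : One KB := ⟨⟨0, 0⟩⟩
instance : Inv KB := ⟨fun x => ⟨-(((-1 : ℤˣ) ^ x.b : ℤˣ) * x.a), -x.b⟩⟩

lemma mul_def (x y : KB) :
    x * y = ⟨x.a + ((-1 : ℤˣ) ^ x.b : ℤˣ) * y.a, x.b + y.b⟩ := rfl

lemma one_def : (1 : KB) = ⟨0, 0⟩ := rfl

lemma inv_def (x : KB) :
    x⁻¹ = ⟨-(((-1 : ℤˣ) ^ x.b : ℤˣ) * x.a), -x.b⟩ := rfl

instance : Group KB :=
  Group.ofLeftAxioms
    (by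
      rintro ⟨a, b⟩ ⟨c, d⟩ ⟨e, f⟩
      ext <;> simp [mul_def, zpow_add] <;> ring)
    (by rintro ⟨a, b⟩; ext <;> simp [mul_def, one_def])
    (by
      rintro ⟨a, b⟩
      ext <;> simp [mul_def, one_def, inv_def, zpow_neg])

end KB
namespace KleinBU

/-- Generator `u` of the free group `F(u,v)`. -/
def u : FreeGroup Bool := FreeGroup.of true

/-- Generator `v` of the free group `F(u,v)`. -/
def v : FreeGroup Bool := FreeGroup.of false

/-- The homomorphism `g : F(u,v) → ℤ ⋊ ℤ` with `g u = (1,0)` and `g v = (0,1)`. -/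
def g : FreeGroup Bool →* KB :=
  FreeGroup.lift (fun x => if x then ⟨1, 0⟩ else ⟨0, 1⟩)

/-- The element `B = u v u v⁻¹`. -/
def Bel : FreeGroup Bool := u * v * u * v⁻¹

/-- The element `B_{k,l} = v^k u^l B u^{-l} v^{-k}`. -/
def Bkl (k l : ℤ) : FreeGroup Bool := v ^ k * u ^ l * Bel * u ^ (-l) * v ^ (-k)

end KleinBU

namespace KleinBU

/-- `(-1)^k` as an integer. -/
def sgn (k : ℤ) : ℤ := (((-1 : ℤˣ) ^ k : ℤˣ) : ℤ)

lemma sgn_zero : sgn 0 = 1 := rfl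

lemma sgn_add (k l : ℤ) : sgn (k + l) = sgn k * sgn l := by
  simp [sgn, zpow_add]

lemma sgn_add_one (k : ℤ) : sgn (k + 1) = -sgn k := by
  rw [sgn_add]; simp [sgn]

lemma sgn_sub_one (k : ℤ) : sgn (k - 1) = -sgn k := by
  have := sgn_add_one (k - 1); simp at this; omega

lemma sgn_mul_self (k : ℤ) : sgn k * sgn k = 1 := by
  rw [← sgn_add]
  have : k + k = 2 * k := by ring
  simp [this, sgn, zpow_mul]

lemma sgn_one_add (k : ℤ) : sgn (1 + k) = -sgn k := by
  rw [add_comm]; exact sgn_add_one k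

lemma sgn_neg_one_add (k : ℤ) : sgn (-1 + k) = -sgn k := by
  have := sgn_one_add (-1 + k); simp at this; omega

lemma sgn_eq_one_or (k : ℤ) : sgn k = 1 ∨ sgn k = -1 := by
  rcases Int.units_eq_one_or ((-1 : ℤˣ) ^ k) with h | h <;> simp [sgn, h]

lemma sgn_neg (k : ℤ) : sgn (-k) = sgn k := by
  have h1 := sgn_add k (-k)
  have h2 := sgn_mul_self k
  simp [sgn_zero] at h1
  rcases sgn_eq_one_or k with h | h <;> rcases sgn_eq_one_or (-k) with h' | h' <;>
    rw [h] at h1 h2 ⊢ <;> rw [h'] at h1 ⊢ <;> omega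

namespace KBfacts

lemma U_pow (l : ℤ) : (⟨1, 0⟩ : KB) ^ l = ⟨l, 0⟩ := by
  induction l using Int.induction_on with
  | zero => rfl
  | succ n ih => rw [zpow_add_one, ih]; ext <;> simp [KB.mul_def]
  | pred n ih => rw [zpow_sub_one, ih]; ext <;> simp [KB.mul_def, KB.inv_def] <;> ring

lemma V_pow (k : ℤ) : (⟨0, 1⟩ : KB) ^ k = ⟨0, k⟩ := by
  induction k using Int.induction_on with
  | zero => rfl
  | succ n ih => rw [zpow_add_one, ih]; ext <;> simp [KB.mul_def]
  | pred n ih => rw [zpow_sub_one, ih]; ext <;> simp [KB.mul_def, KB.inv_def] <;> ring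

end KBfacts

lemma g_u : g u = ⟨1, 0⟩ := by simp [g, u]

lemma g_v : g v = ⟨0, 1⟩ := by simp [g, v]

lemma g_Bel : g Bel = 1 := by
  simp only [Bel, map_mul, map_inv, g_u, g_v]
  ext <;> simp [KB.mul_def, KB.inv_def, KB.one_def]

lemma g_Bkl (k l : ℤ) : g (Bkl k l) = 1 := by
  simp only [Bkl, map_mul, map_zpow, g_Bel]
  group

lemma g_vu (k l : ℤ) : g (v ^ k * u ^ l) = ⟨sgn k * l, k⟩ := by
  rw [map_mul, map_zpow, map_zpow, g_u, g_v, KBfacts.U_pow, KBfacts.V_pow]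
  ext <;> simp [KB.mul_def, sgn]

end KleinBU
namespace KleinBU

/-- The homomorphism `FreeGroup (ℤ × ℤ) →* FreeGroup Bool` sending `(k,l)` to `B_{k,l}`. -/
def phi : FreeGroup (ℤ × ℤ) →* FreeGroup Bool :=
  FreeGroup.lift (fun p => Bkl p.1 p.2)

lemma phi_of (k l : ℤ) : phi (FreeGroup.of (k, l)) = Bkl k l := by simp [phi]

/-- range of `phi`, the subgroup generated by the `B_{k,l}`. -/
def H : Subgroup (FreeGroup Bool) := MonoidHom.range phi

lemma Bkl_mem (k l : ℤ) : Bkl k l ∈ H := ⟨FreeGroup.of (k, l), phi_of k l⟩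

lemma Bel_mem : Bel ∈ H := by
  have := Bkl_mem 0 0
  simpa [Bkl] using this

lemma mem_H_conj {x : FreeGroup Bool}
    (hx : ∀ k l : ℤ, x * Bkl k l * x⁻¹ ∈ H) {h : FreeGroup Bool} (hh : h ∈ H) :
    x * h * x⁻¹ ∈ H := by
  obtain ⟨w, rfl⟩ := hh
  induction w using FreeGroup.induction_on with
  | C1 => simpa using one_mem H
  | of p =>
    rcases p with ⟨k, l⟩
    rw [phi_of]
    exact hx k l
  | inv_of p ih =>
    have : x * phi (FreeGroup.of p : FreeGroup (ℤ × ℤ))⁻¹ * x⁻¹ =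
        (x * phi (FreeGroup.of p : FreeGroup (ℤ × ℤ)) * x⁻¹)⁻¹ := by
      rw [map_inv]; group
    rw [this]; exact inv_mem ih
  | mul y z ihy ihz =>
    have : x * phi (y * z) * x⁻¹ = (x * phi y * x⁻¹) * (x * phi z * x⁻¹) := by
      rw [map_mul]; group
    rw [this]; exact mul_mem ihy ihz

lemma v_Bkl_conj (k l : ℤ) : v * Bkl k l * v⁻¹ = Bkl (k + 1) l := by
  unfold Bkl; group

lemma vinv_Bkl_conj (k l : ℤ) : v⁻¹ * Bkl k l * v = Bkl (k - 1) l := by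
  unfold Bkl; group

lemma v_conj_mem {h : FreeGroup Bool} (hh : h ∈ H) : v * h * v⁻¹ ∈ H :=
  mem_H_conj (fun k l => by rw [v_Bkl_conj]; exact Bkl_mem _ _) hh

lemma vinv_conj_mem {h : FreeGroup Bool} (hh : h ∈ H) : v⁻¹ * h * v ∈ H := by
  have := mem_H_conj (x := v⁻¹) (fun k l => by
    rw [show (v⁻¹)⁻¹ = v by group, vinv_Bkl_conj]; exact Bkl_mem _ _) hh
  rwa [show (v⁻¹)⁻¹ = v by group] at this

/-- key identities for pushing `u` across `v`. -/
lemma u_v : u * v = Bel * (v * u⁻¹) := by simp [Bel]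

lemma uinv_v : u⁻¹ * v = (Bkl 0 (-1))⁻¹ * (v * u) := by
  simp [Bkl, Bel]; group

lemma u_vinv : u * v⁻¹ = Bkl (-1) (-1) * (v⁻¹ * u⁻¹) := by
  simp [Bkl, Bel]; group

lemma uinv_vinv : u⁻¹ * v⁻¹ = (Bkl (-1) 0)⁻¹ * (v⁻¹ * u) := by
  simp [Bkl, Bel]; group

/-- Lemma A: pushing `u^{±1}` across `v^k`. -/
lemma u_push (k : ℤ) :
    (∃ h ∈ H, u * v ^ k = h * (v ^ k * u ^ sgn k)) ∧
    (∃ h ∈ H, u⁻¹ * v ^ k = h * (v ^ k * u ^ (-sgn k))) := by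
  induction k using Int.induction_on with
  | zero => exact ⟨⟨1, one_mem H, by simp [sgn_zero]⟩, ⟨1, one_mem H, by simp [sgn_zero]⟩⟩
  | succ n ih =>
    obtain ⟨⟨h1, h1m, e1⟩, ⟨h2, h2m, e2⟩⟩ := ih
    constructor
    · refine ⟨Bel * (v * h2 * v⁻¹), mul_mem Bel_mem (v_conj_mem h2m), ?_⟩
      rw [sgn_add_one, show ((n : ℤ) + 1) = 1 + (n : ℤ) by ring, zpow_add, zpow_one]
      calc u * (v * v ^ (n : ℤ))
          = Bel * v * (u⁻¹ * v ^ (n : ℤ)) := by rw [← mul_assoc, u_v]; group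
        _ = Bel * v * (h2 * (v ^ (n : ℤ) * u ^ (-sgn (n : ℤ)))) := by rw [e2]
        _ = Bel * (v * h2 * v⁻¹) * (v * v ^ (n : ℤ) * u ^ (-sgn (n : ℤ))) := by group
    · refine ⟨(Bkl 0 (-1))⁻¹ * (v * h1 * v⁻¹),
        mul_mem (inv_mem (Bkl_mem 0 (-1))) (v_conj_mem h1m), ?_⟩
      rw [sgn_add_one, neg_neg, show ((n : ℤ) + 1) = 1 + (n : ℤ) by ring, zpow_add, zpow_one]
      calc u⁻¹ * (v * v ^ (n : ℤ))
          = (Bkl 0 (-1))⁻¹ * v * (u * v ^ (n : ℤ)) := by rw [← mul_assoc, uinv_v]; group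
        _ = (Bkl 0 (-1))⁻¹ * v * (h1 * (v ^ (n : ℤ) * u ^ sgn (n : ℤ))) := by rw [e1]
        _ = (Bkl 0 (-1))⁻¹ * (v * h1 * v⁻¹) * (v * v ^ (n : ℤ) * u ^ sgn (n : ℤ)) := by group
  | pred n ih =>
    obtain ⟨⟨h1, h1m, e1⟩, ⟨h2, h2m, e2⟩⟩ := ih
    constructor
    · refine ⟨Bkl (-1) (-1) * (v⁻¹ * h2 * v),
        mul_mem (Bkl_mem (-1) (-1)) (vinv_conj_mem h2m), ?_⟩
      rw [show (sgn (-(n : ℤ) - 1)) = -sgn (-(n : ℤ)) from sgn_sub_one _,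
        show (-(n : ℤ) - 1) = -1 + -(n : ℤ) by ring, zpow_add,
        show (v : FreeGroup Bool) ^ (-1 : ℤ) = v⁻¹ by group]
      calc u * (v⁻¹ * v ^ (-(n : ℤ)))
          = Bkl (-1) (-1) * v⁻¹ * (u⁻¹ * v ^ (-(n : ℤ))) := by rw [← mul_assoc, u_vinv]; group
        _ = Bkl (-1) (-1) * v⁻¹ * (h2 * (v ^ (-(n : ℤ)) * u ^ (-sgn (-(n : ℤ))))) := by rw [e2]
        _ = Bkl (-1) (-1) * (v⁻¹ * h2 * v) * (v⁻¹ * v ^ (-(n : ℤ)) * u ^ (-sgn (-(n : ℤ)))) := by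
            group
    · refine ⟨(Bkl (-1) 0)⁻¹ * (v⁻¹ * h1 * v),
        mul_mem (inv_mem (Bkl_mem (-1) 0)) (vinv_conj_mem h1m), ?_⟩
      rw [show (sgn (-(n : ℤ) - 1)) = -sgn (-(n : ℤ)) from sgn_sub_one _, neg_neg,
        show (-(n : ℤ) - 1) = -1 + -(n : ℤ) by ring, zpow_add,
        show (v : FreeGroup Bool) ^ (-1 : ℤ) = v⁻¹ by group]
      calc u⁻¹ * (v⁻¹ * v ^ (-(n : ℤ)))
          = (Bkl (-1) 0)⁻¹ * v⁻¹ * (u * v ^ (-(n : ℤ))) := by rw [← mul_assoc, uinv_vinv]; group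
        _ = (Bkl (-1) 0)⁻¹ * v⁻¹ * (h1 * (v ^ (-(n : ℤ)) * u ^ sgn (-(n : ℤ)))) := by rw [e1]
        _ = (Bkl (-1) 0)⁻¹ * (v⁻¹ * h1 * v) * (v⁻¹ * v ^ (-(n : ℤ)) * u ^ sgn (-(n : ℤ))) := by
            group

end KleinBU
namespace KleinBU

lemma u_Bkl_conj (k l : ℤ) : u * Bkl k l * u⁻¹ ∈ H := by
  obtain ⟨h, hm, e⟩ := (u_push k).1
  have e1 : u * Bkl k l * u⁻¹ = (u * v ^ k) * (u ^ l * Bel * u ^ (-l)) * (u * v ^ k)⁻¹ := by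
    unfold Bkl; group
  rw [e1, e]
  have e2 : (h * (v ^ k * u ^ sgn k)) * (u ^ l * Bel * u ^ (-l)) *
      (h * (v ^ k * u ^ sgn k))⁻¹ = h * Bkl k (sgn k + l) * h⁻¹ := by
    unfold Bkl; group
  rw [e2]
  exact mul_mem (mul_mem hm (Bkl_mem _ _)) (inv_mem hm)

lemma uinv_Bkl_conj (k l : ℤ) : u⁻¹ * Bkl k l * u ∈ H := by
  obtain ⟨h, hm, e⟩ := (u_push k).2
  have e1 : u⁻¹ * Bkl k l * u = (u⁻¹ * v ^ k) * (u ^ l * Bel * u ^ (-l)) * (u⁻¹ * v ^ k)⁻¹ := by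
    unfold Bkl; group
  rw [e1, e]
  have e2 : (h * (v ^ k * u ^ (-sgn k))) * (u ^ l * Bel * u ^ (-l)) *
      (h * (v ^ k * u ^ (-sgn k)))⁻¹ = h * Bkl k (-sgn k + l) * h⁻¹ := by
    unfold Bkl; group
  rw [e2]
  exact mul_mem (mul_mem hm (Bkl_mem _ _)) (inv_mem hm)

lemma conj_mem_H (x : FreeGroup Bool) {h : FreeGroup Bool} (hh : h ∈ H) :
    x * h * x⁻¹ ∈ H := by
  induction x using FreeGroup.induction_on generalizing h with
  | C1 => simpa using hh
  | of b =>
    cases b with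
    | true =>
      show u * h * u⁻¹ ∈ H
      exact mem_H_conj (fun k l => u_Bkl_conj k l) hh
    | false =>
      show v * h * v⁻¹ ∈ H
      exact mem_H_conj (fun k l => by rw [v_Bkl_conj]; exact Bkl_mem _ _) hh
  | inv_of b ih =>
    cases b with
    | true =>
      have := mem_H_conj (x := (u⁻¹ : FreeGroup Bool)) (fun k l => by
        rw [show (u⁻¹ : FreeGroup Bool)⁻¹ = u by group]; exact uinv_Bkl_conj k l) hh
      show (pure true : FreeGroup Bool)⁻¹ * h * ((pure true : FreeGroup Bool)⁻¹)⁻¹ ∈ H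
      rwa [show ((pure true : FreeGroup Bool)) = u from rfl]
    | false =>
      have := mem_H_conj (x := (v⁻¹ : FreeGroup Bool)) (fun k l => by
        rw [show (v⁻¹ : FreeGroup Bool)⁻¹ = v by group, vinv_Bkl_conj]
        exact Bkl_mem _ _) hh
      show (pure false : FreeGroup Bool)⁻¹ * h * ((pure false : FreeGroup Bool)⁻¹)⁻¹ ∈ H
      rwa [show ((pure false : FreeGroup Bool)) = v from rfl]
  | mul y z ihy ihz =>
    have : y * z * h * (y * z)⁻¹ = y * (z * h * z⁻¹) * y⁻¹ := by group
    rw [this]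
    exact ihy (ihz hh)

instance H_normal : H.Normal := ⟨fun h hh x => conj_mem_H x hh⟩

lemma H_le_ker : H ≤ MonoidHom.ker g := by
  rintro x ⟨w, rfl⟩
  have : g.comp phi = 1 := by
    apply FreeGroup.ext_hom
    rintro ⟨k, l⟩
    simp [phi, g_Bkl]
  have := DFunLike.congr_fun this w
  simpa [MonoidHom.mem_ker] using this

end KleinBU
namespace KleinBU

/-- The quotient of the free group by `H`. -/
abbrev Q := FreeGroup Bool ⧸ H

/-- image of `u` in the quotient. -/
def ub : Q := QuotientGroup.mk u
/-- image of `v` in the quotient. -/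
def vb : Q := QuotientGroup.mk v

lemma rel_Q : vb⁻¹ * ub * vb = ub⁻¹ := by
  have h1 : (QuotientGroup.mk Bel : Q) = 1 := (QuotientGroup.eq_one_iff _).2 Bel_mem
  have h2 : (QuotientGroup.mk Bel : Q) = ub * vb * ub * vb⁻¹ := by
    simp [Bel, ub, vb, QuotientGroup.mk_mul, QuotientGroup.mk_inv]
  rw [h1] at h2
  have h3 : ub * vb * ub = vb := by
    have := h2.symm
    calc ub * vb * ub = (ub * vb * ub * vb⁻¹) * vb := by group
      _ = 1 * vb := by rw [← this]
      _ = vb := by group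
  calc vb⁻¹ * ub * vb = vb⁻¹ * (ub * vb * ub) * ub⁻¹ := by group
    _ = vb⁻¹ * vb * ub⁻¹ := by rw [h3]
    _ = ub⁻¹ := by group

lemma conj_pow_Q (k l : ℤ) : vb ^ (-k) * ub ^ l * vb ^ k = ub ^ (sgn k * l) := by
  induction k using Int.induction_on generalizing l with
  | zero => simp [sgn_zero]
  | succ n ih =>
    have base : vb⁻¹ * ub ^ l * vb = ub ^ (-l) := by
      calc vb⁻¹ * ub ^ l * vb = (vb⁻¹ * ub * vb) ^ l := by
            rw [show (vb⁻¹ * ub * vb : Q) = vb⁻¹ * ub * vb⁻¹⁻¹ by group, conj_zpow]; group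
        _ = (ub⁻¹) ^ l := by rw [rel_Q]
        _ = ub ^ (-l) := by group
    calc vb ^ (-((n : ℤ) + 1)) * ub ^ l * vb ^ ((n : ℤ) + 1)
        = vb ^ (-(n : ℤ)) * (vb⁻¹ * ub ^ l * vb) * vb ^ (n : ℤ) := by
          rw [show (-((n : ℤ) + 1)) = -(n : ℤ) + (-1 : ℤ) by ring, zpow_add,
            show ((n : ℤ) + 1) = 1 + (n : ℤ) by ring, zpow_add]
          group
      _ = vb ^ (-(n : ℤ)) * ub ^ (-l) * vb ^ (n : ℤ) := by rw [base]
      _ = ub ^ (sgn (n : ℤ) * (-l)) := ih (-l)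
      _ = ub ^ (sgn ((n : ℤ) + 1) * l) := by rw [sgn_add_one]; ring_nf
  | pred n ih =>
    have base : vb * ub ^ l * vb⁻¹ = ub ^ (-l) := by
      have : ub ^ l = vb⁻¹ * ub ^ (-l) * vb := by
        have := conj_zpow (i := l) (a := vb⁻¹) (b := ub)
        calc ub ^ l = ((ub⁻¹) ^ (-l) : Q) := by group
          _ = ((vb⁻¹ * ub * vb) ^ (-l) : Q) := by rw [rel_Q]
          _ = vb⁻¹ * ub ^ (-l) * vb := by
              rw [show (vb⁻¹ * ub * vb : Q) = vb⁻¹ * ub * vb⁻¹⁻¹ by group, conj_zpow]; group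
      rw [this]; group
    calc vb ^ (-(-(n : ℤ) - 1)) * ub ^ l * vb ^ (-(n : ℤ) - 1)
        = vb ^ ((n : ℤ)) * (vb * ub ^ l * vb⁻¹) * vb ^ (-(n : ℤ)) := by
          rw [show (-(-(n : ℤ) - 1)) = (n : ℤ) + 1 by ring, zpow_add,
            show (-(n : ℤ) - 1) = -1 + -(n : ℤ) by ring, zpow_add]
          group
      _ = vb ^ ((n : ℤ)) * ub ^ (-l) * vb ^ (-(n : ℤ)) := by rw [base]
      _ = ub ^ (sgn (-(n : ℤ)) * (-l)) := by
          have := ih (-l)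
          rw [show (-(-(n : ℤ))) = (n : ℤ) by ring] at this
          rw [sgn_neg] at this ⊢
          exact this
      _ = ub ^ (sgn (-(n : ℤ) - 1) * l) := by rw [sgn_sub_one]; ring_nf

lemma u_pow_v_pow (l k : ℤ) : ub ^ l * vb ^ k = vb ^ k * ub ^ (sgn k * l) := by
  have := conj_pow_Q k l
  calc ub ^ l * vb ^ k = vb ^ k * (vb ^ (-k) * ub ^ l * vb ^ k) := by
        rw [show (vb ^ (-k) : Q) = (vb ^ k)⁻¹ by group]; group
    _ = vb ^ k * ub ^ (sgn k * l) := by rw [this]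

lemma normal_form_Q (q : Q) : ∃ k l : ℤ, q = vb ^ k * ub ^ l := by
  obtain ⟨w, rfl⟩ := QuotientGroup.mk_surjective q
  induction w using FreeGroup.induction_on with
  | C1 => exact ⟨0, 0, by simp⟩
  | of b =>
    cases b with
    | true => exact ⟨0, 1, by simp [ub]; rfl⟩
    | false => exact ⟨1, 0, by simp [vb]; rfl⟩
  | inv_of b ih =>
    cases b with
    | true =>
      refine ⟨0, -1, ?_⟩
      have : (QuotientGroup.mk (FreeGroup.of true : FreeGroup Bool)⁻¹ : Q) = ub⁻¹ := by
        rw [QuotientGroup.mk_inv]; rfl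
      rw [this]; group
    | false =>
      refine ⟨-1, 0, ?_⟩
      have : (QuotientGroup.mk (FreeGroup.of false : FreeGroup Bool)⁻¹ : Q) = vb⁻¹ := by
        rw [QuotientGroup.mk_inv]; rfl
      rw [this]; group
  | mul y z ihy ihz =>
    obtain ⟨k, l, hy⟩ := ihy
    obtain ⟨k', l', hz⟩ := ihz
    refine ⟨k + k', sgn k' * l + l', ?_⟩
    rw [QuotientGroup.mk_mul, hy, hz]
    calc vb ^ k * ub ^ l * (vb ^ k' * ub ^ l')
        = vb ^ k * (ub ^ l * vb ^ k') * ub ^ l' := by group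
      _ = vb ^ k * (vb ^ k' * ub ^ (sgn k' * l)) * ub ^ l' := by rw [u_pow_v_pow]
      _ = vb ^ (k + k') * ub ^ (sgn k' * l + l') := by rw [zpow_add, zpow_add]; group

lemma ker_le_H : MonoidHom.ker g ≤ H := by
  intro w hw
  obtain ⟨k, l, hkl⟩ := normal_form_Q (QuotientGroup.mk w)
  have hmk : (QuotientGroup.mk (v ^ k * u ^ l) : Q) = QuotientGroup.mk w := by
    rw [hkl]
    simp [ub, vb, QuotientGroup.mk_mul, QuotientGroup.mk_zpow]
  have hmem : (v ^ k * u ^ l)⁻¹ * w ∈ H := QuotientGroup.eq.1 hmk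
  have hg : g ((v ^ k * u ^ l)⁻¹ * w) = 1 := H_le_ker hmem
  rw [map_mul, map_inv, MonoidHom.mem_ker.1 hw, mul_one, g_vu] at hg
  have h0 : (⟨sgn k * l, k⟩ : KB)⁻¹ = 1 := hg
  have h1 : (⟨sgn k * l, k⟩ : KB) = 1 := by
    rw [← inv_inv (⟨sgn k * l, k⟩ : KB), h0]; group
  rw [KB.one_def] at h1
  have hk : k = 0 := congrArg KB.b h1
  have hl : l = 0 := by
    have := congrArg KB.a h1
    simp at this
    rcases this with h | h
    · rcases sgn_eq_one_or k with h' | h' <;> omega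
    · exact h
  rw [hk, hl] at hmem
  simpa using hmem

end KleinBU
namespace KleinBU

open SemidirectProduct

/-- The permutation of `ℤ × ℤ` induced by `x : KB`. -/
def pEquiv (x : KB) : (ℤ × ℤ) ≃ (ℤ × ℤ) where
  toFun p := (p.1 + x.b, p.2 + sgn (p.1 + x.b) * x.a)
  invFun p := (p.1 - x.b, p.2 - sgn p.1 * x.a)
  left_inv p := by
    ext <;> simp
  right_inv p := by
    ext <;> simp

lemma pEquiv_apply (x : KB) (p : ℤ × ℤ) :
    pEquiv x p = (p.1 + x.b, p.2 + sgn (p.1 + x.b) * x.a) := rfl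

/-- The action of `KB` on `FreeGroup (ℤ × ℤ)`. -/
def A : KB →* MulAut (FreeGroup (ℤ × ℤ)) where
  toFun x := FreeGroup.freeGroupCongr (pEquiv x)
  map_one' := by
    show FreeGroup.freeGroupCongr (pEquiv 1) = 1
    have : pEquiv 1 = Equiv.refl _ := by
      apply Equiv.ext
      intro p
      simp [pEquiv_apply, KB.one_def]
    rw [this, FreeGroup.freeGroupCongr_refl]
    rfl
  map_mul' x y := by
    have : pEquiv (x * y) = (pEquiv y).trans (pEquiv x) := by
      apply Equiv.ext
      rintro ⟨p1, p2⟩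
      have h1 : sgn (p1 + x.b + y.b) * sgn x.b = sgn (p1 + y.b) := by
        rw [show p1 + x.b + y.b = (p1 + y.b) + x.b by ring, sgn_add]
        have := sgn_mul_self x.b
        ring_nf
        linear_combination sgn (p1 + y.b) * this
      simp only [pEquiv_apply, Equiv.trans_apply, KB.mul_def]
      ext
      · simp; ring
      · simp
        rw [show p1 + (x.b + y.b) = p1 + x.b + y.b by ring,
          show p1 + y.b + x.b = p1 + x.b + y.b by ring,
          show (((-1 : ℤˣ) ^ x.b : ℤˣ) : ℤ) = sgn x.b from rfl]
        linear_combination y.a * h1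
    show FreeGroup.freeGroupCongr (pEquiv (x * y)) =
      (FreeGroup.freeGroupCongr (pEquiv y)).trans (FreeGroup.freeGroupCongr (pEquiv x))
    rw [FreeGroup.freeGroupCongr_trans, this]

lemma A_of (x : KB) (p : ℤ × ℤ) :
    A x (FreeGroup.of p) = FreeGroup.of (p.1 + x.b, p.2 + sgn (p.1 + x.b) * x.a) := by
  show FreeGroup.freeGroupCongr (pEquiv x) (FreeGroup.of p) = _
  simp [FreeGroup.map.of, pEquiv_apply]

/-- The ambient semidirect product. -/
abbrev SDP := SemidirectProduct.mk (φ := A)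

/-- The rewriting homomorphism into the semidirect product. -/
def Psi : FreeGroup Bool →* FreeGroup (ℤ × ℤ) ⋊[A] KB :=
  FreeGroup.lift (fun b => if b then inr ⟨1, 0⟩ else ⟨FreeGroup.of ((0 : ℤ), (0 : ℤ)), ⟨0, 1⟩⟩)

lemma Psi_u : Psi u = inr ⟨1, 0⟩ := by simp [Psi, u]

lemma Psi_v : Psi v = ⟨FreeGroup.of ((0 : ℤ), (0 : ℤ)), ⟨0, 1⟩⟩ := by simp [Psi, v]

end KleinBU
namespace KleinBU

open SemidirectProduct

/-- positive part of the Schreier-type word. -/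
def lamP (k : ℤ) : ℕ → FreeGroup (ℤ × ℤ)
  | 0 => 1
  | n + 1 => FreeGroup.of (k, (n : ℤ)) * lamP k n

/-- negative part of the Schreier-type word. -/
def lamN (k : ℤ) : ℕ → FreeGroup (ℤ × ℤ)
  | 0 => 1
  | n + 1 => (FreeGroup.of (k, -((n : ℤ) + 1)))⁻¹ * lamN k n

/-- the word `of(k,l-1) ⋯ of(k,0)` (resp. inverses for negative `l`). -/
def lam (k : ℤ) : ℤ → FreeGroup (ℤ × ℤ)
  | Int.ofNat n => lamP k n
  | Int.negSucc n => lamN k (n + 1)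

lemma lam_zero (k : ℤ) : lam k 0 = 1 := rfl

lemma lam_succ (k l : ℤ) : lam k (l + 1) = FreeGroup.of (k, l) * lam k l := by
  cases l with
  | ofNat n =>
    show lam k ((n : ℤ) + 1) = FreeGroup.of (k, (n : ℤ)) * lam k (Int.ofNat n)
    rw [show ((n : ℤ) + 1) = (Int.ofNat (n + 1)) by simp]
    rfl
  | negSucc n =>
    cases n with
    | zero =>
      show lam k 0 = FreeGroup.of (k, Int.negSucc 0) * lam k (Int.negSucc 0)
      show (1 : FreeGroup (ℤ × ℤ)) = FreeGroup.of (k, Int.negSucc 0) * lamN k 1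
      rw [show lamN k 1 = (FreeGroup.of (k, -((0 : ℤ) + 1)))⁻¹ * lamN k 0 from rfl]
      rw [show lamN k 0 = 1 from rfl]
      rw [show ((Int.negSucc 0)) = -((0 : ℤ) + 1) by rfl]
      group
    | succ m =>
      show lam k (Int.negSucc m) = FreeGroup.of (k, Int.negSucc (m + 1)) * lam k (Int.negSucc (m + 1))
      show lamN k (m + 1) = FreeGroup.of (k, Int.negSucc (m + 1)) * lamN k (m + 2)
      rw [show lamN k (m + 2) = (FreeGroup.of (k, -(((m + 1 : ℕ) : ℤ) + 1)))⁻¹ * lamN k (m + 1) from rfl]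
      rw [show (Int.negSucc (m + 1)) = -(((m + 1 : ℕ) : ℤ) + 1) by rw [Int.negSucc_eq]]
      group

/-- The left inverse of the rewriting. -/
def Lam : FreeGroup (ℤ × ℤ) →* FreeGroup (ℤ × ℤ) :=
  FreeGroup.lift (fun p => lam p.1 p.2)

lemma Lam_of (k l : ℤ) : Lam (FreeGroup.of (k, l)) = lam k l := by simp [Lam]

/-- the subgroup generated by the `of (j, 0)`. -/
def Z0 : Subgroup (FreeGroup (ℤ × ℤ)) :=
  Subgroup.closure {x | ∃ j : ℤ, x = FreeGroup.of (j, (0 : ℤ))}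

lemma Lam_Z0 {c : FreeGroup (ℤ × ℤ)} (hc : c ∈ Z0) : Lam c = 1 := by
  have : Z0 ≤ MonoidHom.ker Lam := by
    rw [Z0]
    apply (Subgroup.closure_le _).2
    rintro x ⟨j, rfl⟩
    simp [MonoidHom.mem_ker, Lam_of, lam_zero]
  exact this hc

lemma A_Z0 {x : KB} (hx : x.a = 0) {c : FreeGroup (ℤ × ℤ)} (hc : c ∈ Z0) :
    A x c ∈ Z0 := by
  induction hc using Subgroup.closure_induction with
  | mem y hy =>
    obtain ⟨j, rfl⟩ := hy
    apply Subgroup.subset_closure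
    exact ⟨j + x.b, by rw [A_of, hx]; simp⟩
  | one => simp only [map_one]; exact one_mem _
  | mul y z _ _ ihy ihz => rw [map_mul]; exact mul_mem ihy ihz
  | inv y _ ihy => rw [map_inv]; exact inv_mem ihy

/-- elements of the semidirect product whose `KB`-part is a power of `v`
and whose left part lies in `Z0`. -/
def K : Subgroup (FreeGroup (ℤ × ℤ) ⋊[A] KB) where
  carrier := {s | s.right.a = 0 ∧ s.left ∈ Z0}
  one_mem' := by
    constructor
    · show (1 : KB).a = 0; rfl
    · show (1 : FreeGroup (ℤ × ℤ)) ∈ Z0; exact one_mem _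
  mul_mem' := by
    rintro s t ⟨hs1, hs2⟩ ⟨ht1, ht2⟩
    constructor
    · show (s.right * t.right).a = 0
      rw [KB.mul_def]
      simp [hs1, ht1]
    · show s.left * A s.right t.left ∈ Z0
      exact mul_mem hs2 (A_Z0 hs1 ht2)
  inv_mem' := by
    rintro s ⟨hs1, hs2⟩
    constructor
    · show (s.right⁻¹).a = 0
      rw [KB.inv_def]
      simp [hs1]
    · show A s.right⁻¹ s.left⁻¹ ∈ Z0
      exact A_Z0 (by rw [KB.inv_def]; simp [hs1]) (inv_mem hs2)

lemma Psi_v_mem_K : Psi v ∈ K := by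
  rw [Psi_v]
  exact ⟨rfl, Subgroup.subset_closure ⟨0, rfl⟩⟩

lemma conj_inl (s : FreeGroup (ℤ × ℤ) ⋊[A] KB) (q : FreeGroup (ℤ × ℤ)) :
    s * inl q * s⁻¹ = inl (s.left * A s.right q * s.left⁻¹) := by
  refine SemidirectProduct.ext ?_ ?_
  · show (s.left * A s.right (inl q).left) * A (s.right * (inl q).right) s⁻¹.left = _
    rw [left_inl, right_inl, mul_one, inv_left]
    have : A s.right ((A s.right⁻¹) s.left⁻¹) = s.left⁻¹ := by
      rw [← MulAut.mul_apply, ← map_mul, mul_inv_cancel, map_one, MulAut.one_apply]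
    rw [mul_assoc, ← map_mul (A s.right)]
    rw [show A s.right (q * (A s.right⁻¹) s.left⁻¹) =
      A s.right q * A s.right ((A s.right⁻¹) s.left⁻¹) from map_mul _ _ _, this]
    rw [left_inl]
    group
  · show s.right * (inl q).right * s⁻¹.right = _
    rw [right_inl, inv_right, right_inl]
    group

end KleinBU
namespace KleinBU

open SemidirectProduct

lemma A_cancel (x : KB) (n : FreeGroup (ℤ × ℤ)) : A x (A x⁻¹ n) = n := by
  rw [← MulAut.mul_apply, ← map_mul, mul_inv_cancel, map_one, MulAut.one_apply]

lemma mk_mul_inv_mk (n m : FreeGroup (ℤ × ℤ)) (x : KB) :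
    (⟨n, x⟩ : FreeGroup (ℤ × ℤ) ⋊[A] KB) * (⟨m, x⟩ : FreeGroup (ℤ × ℤ) ⋊[A] KB)⁻¹ =
      inl (n * m⁻¹) := by
  refine SemidirectProduct.ext ?_ ?_
  · show n * A x ((A x⁻¹) m⁻¹) = (inl (n * m⁻¹)).left
    rw [A_cancel, left_inl]
  · show x * x⁻¹ = (inl (n * m⁻¹)).right
    rw [right_inl, mul_inv_cancel]

lemma Psi_Bel : Psi Bel =
    inl (FreeGroup.of ((0 : ℤ), (1 : ℤ)) * (FreeGroup.of ((0 : ℤ), (0 : ℤ)))⁻¹) := by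
  simp only [Bel, map_mul, map_inv, Psi_u, Psi_v]
  have P1 : inr (⟨1, 0⟩ : KB) * (⟨FreeGroup.of ((0 : ℤ), (0 : ℤ)), ⟨0, 1⟩⟩ :
      FreeGroup (ℤ × ℤ) ⋊[A] KB) = ⟨FreeGroup.of ((0 : ℤ), (1 : ℤ)), ⟨1, 1⟩⟩ := by
    refine SemidirectProduct.ext ?_ ?_
    · show (1 : FreeGroup (ℤ × ℤ)) * A ⟨1, 0⟩ (FreeGroup.of ((0 : ℤ), (0 : ℤ))) = _
      rw [one_mul, A_of]
      norm_num [sgn_zero]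
    · show (⟨1, 0⟩ : KB) * ⟨0, 1⟩ = ⟨1, 1⟩
      ext <;> simp [KB.mul_def]
  have P2 : (⟨FreeGroup.of ((0 : ℤ), (1 : ℤ)), (⟨1, 1⟩ : KB)⟩ :
      FreeGroup (ℤ × ℤ) ⋊[A] KB) * inr (⟨1, 0⟩ : KB) =
      ⟨FreeGroup.of ((0 : ℤ), (1 : ℤ)), ⟨0, 1⟩⟩ := by
    refine SemidirectProduct.ext ?_ ?_
    · show FreeGroup.of ((0 : ℤ), (1 : ℤ)) * A ⟨1, 1⟩ (1 : FreeGroup (ℤ × ℤ)) = _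
      rw [map_one, mul_one]
    · show (⟨1, 1⟩ : KB) * ⟨1, 0⟩ = ⟨0, 1⟩
      ext <;> simp [KB.mul_def]
  rw [mul_assoc (inr (⟨1, 0⟩ : KB)), ← mul_assoc (inr (⟨1, 0⟩ : KB)), P1, P2, mk_mul_inv_mk,
    map_mul, map_inv]

lemma Psi_u_pow (l : ℤ) : Psi (u ^ l) = inr ⟨l, 0⟩ := by
  rw [map_zpow, Psi_u, ← map_zpow, KBfacts.U_pow]

lemma Psi_v_pow_right (k : ℤ) : (Psi (v ^ k)).right = ⟨0, k⟩ := by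
  have h : (Psi (v ^ k)).right = rightHom (Psi (v ^ k)) := rfl
  rw [h, map_zpow, map_zpow, Psi_v]
  have : rightHom (⟨FreeGroup.of ((0 : ℤ), (0 : ℤ)), (⟨0, 1⟩ : KB)⟩ :
      FreeGroup (ℤ × ℤ) ⋊[A] KB) = (⟨0, 1⟩ : KB) := rfl
  rw [this, KBfacts.V_pow]

lemma Psi_v_pow_left_mem (k : ℤ) : (Psi (v ^ k)).left ∈ Z0 := by
  have : Psi (v ^ k) ∈ K := by
    rw [map_zpow]
    exact zpow_mem Psi_v_mem_K k
  exact this.2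

lemma Psi_Bkl (k l : ℤ) :
    Psi (Bkl k l) = inl ((Psi (v ^ k)).left *
      (FreeGroup.of (k, l + 1) * (FreeGroup.of (k, l))⁻¹) * (Psi (v ^ k)).left⁻¹) := by
  have h1 : Psi (Bkl k l) =
      Psi (v ^ k) * (Psi (u ^ l) * Psi Bel * (Psi (u ^ l))⁻¹) * (Psi (v ^ k))⁻¹ := by
    rw [Bkl, show u ^ (-l) = (u ^ l)⁻¹ by group, show v ^ (-k) = (v ^ k)⁻¹ by group]
    simp only [map_mul, map_inv]
    group
  have h2 : Psi (u ^ l) * Psi Bel * (Psi (u ^ l))⁻¹ =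
      inl (FreeGroup.of ((0 : ℤ), l + 1) * (FreeGroup.of ((0 : ℤ), l))⁻¹) := by
    rw [Psi_u_pow, Psi_Bel, ← map_inv inr]
    rw [← inl_aut (φ := A) (⟨l, 0⟩ : KB)]
    congr 1
    rw [map_mul, map_inv, A_of, A_of]
    norm_num [sgn_zero, add_comm]
  rw [h1, h2, conj_inl]
  congr 1
  rw [Psi_v_pow_right, map_mul, map_inv, A_of, A_of]
  norm_num

end KleinBU
namespace KleinBU

open SemidirectProduct

lemma Psi_phi (w : FreeGroup (ℤ × ℤ)) :
    (Psi (phi w)).right = 1 ∧ Lam ((Psi (phi w)).left) = w := by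
  induction w using FreeGroup.induction_on with
  | C1 =>
    rw [map_one, map_one]
    exact ⟨one_right, by rw [one_left, map_one]⟩
  | of p =>
    rcases p with ⟨k, l⟩
    rw [phi_of, Psi_Bkl]
    refine ⟨right_inl _, ?_⟩
    rw [left_inl, map_mul, map_mul, map_mul, map_inv, map_inv, Lam_of, Lam_of,
      Lam_Z0 (Psi_v_pow_left_mem k), lam_succ]
    group
  | inv_of p ih =>
    obtain ⟨h1, h2⟩ := ih
    rw [map_inv, map_inv]
    constructor
    · rw [inv_right, h1, inv_one]
    · rw [inv_left, h1, inv_one, map_one, MulAut.one_apply, map_inv, h2]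
  | mul y z ihy ihz =>
    obtain ⟨hy1, hy2⟩ := ihy
    obtain ⟨hz1, hz2⟩ := ihz
    rw [map_mul, map_mul]
    constructor
    · rw [mul_right, hy1, hz1, one_mul]
    · rw [mul_left, hy1, map_one, MulAut.one_apply, map_mul, hy2, hz2]

lemma phi_injective : Function.Injective phi := by
  rw [injective_iff_map_eq_one]
  intro w hw
  have h := (Psi_phi w).2
  rw [hw, map_one] at h
  rw [← h, one_left, map_one]

end KleinBU

open KleinBU in
/-- The kernel of `g : F(u,v) → ℤ ⋊ ℤ` is a free group with basis
`{B_{k,l} : k, l ∈ ℤ}`; in particular it is free of countably infinite rank. -/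
theorem ker_g_free_basis_B :
    ∃ b : FreeGroupBasis (ℤ × ℤ) (MonoidHom.ker g),
      ∀ k l : ℤ, (b (k, l) : FreeGroup Bool) = Bkl k l := by
  have hmem : ∀ w, phi w ∈ MonoidHom.ker g := fun w => H_le_ker ⟨w, rfl⟩
  let f : FreeGroup (ℤ × ℤ) →* MonoidHom.ker g := phi.codRestrict _ hmem
  have hinj : Function.Injective f := fun a b hab =>
    phi_injective (congrArg Subtype.val hab)
  have hsurj : Function.Surjective f := by
    rintro ⟨x, hx⟩
    obtain ⟨w, hw⟩ := ker_le_H hx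
    exact ⟨w, Subtype.ext hw⟩
  let e := MulEquiv.ofBijective f ⟨hinj, hsurj⟩
  refine ⟨FreeGroupBasis.ofRepr e.symm, ?_⟩
  intro k l
  show (((FreeGroupBasis.ofRepr e.symm).repr.symm (FreeGroup.of (k, l)) :
      MonoidHom.ker g) : FreeGroup Bool) = Bkl k l
  have h1 : (FreeGroupBasis.ofRepr e.symm).repr.symm = e := by
    show e.symm.symm = e
    exact MulEquiv.symm_symm e
  rw [h1]
  show (phi (FreeGroup.of (k, l)) : FreeGroup Bool) = Bkl k l
  exact phi_of k l
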